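/- arXiv:2006.05901 — 2 statements merged into one kernel-verified Lean document; each statement's English description precedes it below -/
import Mathlib

section
/- If between two consecutive sender fetch events the sender receives capacity+1 distinctly labeled acknowledgments with alternating index equal to its current index, and at most capacity such packets could have resided in the channel beforehand, then the receiver must have sent at least one acknowledgment with that index during this interval; hence the receiver's LastDeliveredIndex equaled the sender's AltIndex at some configuration in the interval. -/
/-- If the sender receives `capacity+1` distinctly labeled acknowledgments, all with index
`s`, at most `capacity` of which could have resided in the channel beforehand, and every
non-channel-resident one was sent by the receiver with index equal to its
`LastDeliveredIndex` at sending time, then some acknowledgment was sent by the receiver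
when its `LastDeliveredIndex` equaled `s`. -/
theorem receiver_sent_ack {α : Type*} [DecidableEq α]
    (capacity : ℕ) (A C : Finset α)
    (idx : α → ZMod 3) (sentByReceiver : α → Prop) (ldi : α → ZMod 3) (s : ZMod 3)
    (hA : A.card = capacity + 1)
    (hCA : C ⊆ A) (hC : C.card ≤ capacity)
    (hidx : ∀ p ∈ A, idx p = s)
    (hsent : ∀ p ∈ A \ C, sentByReceiver p ∧ ldi p = idx p) :
    ∃ p ∈ A, sentByReceiver p ∧ ldi p = s := by
  have hlt : C.card < A.card := by omega
  have hne : (A \ C).Nonempty := by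
    rw [Finset.sdiff_nonempty]
    intro h
    exact absurd (Finset.card_le_card h) (by omega)
  obtain ⟨p, hp⟩ := hne
  obtain ⟨hpA, hpC⟩ := Finset.mem_sdiff.mp hp
  obtain ⟨h1, h2⟩ := hsent p (Finset.mem_sdiff.mpr ⟨hpA, hpC⟩)
  exact ⟨p, hpA, h1, h2.trans (hidx p hpA)⟩
end

section
/- In a legal execution modeled by interleaved sender-fetch and receiver-deliver events, if between consecutive sender fetches there is at least one receiver delivery and vice versa, then the fetch and delivery events strictly alternate eventually: between the α-th and (α+1)-th fetch there is exactly one delivery, for all sufficiently large α. -/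
/-- If between consecutive sender fetches there is at least one receiver delivery and
between consecutive receiver deliveries there is at least one sender fetch (from index 2
onwards), then eventually fetches and deliveries strictly alternate: for all sufficiently
large `α` there is exactly one delivery between the `α`-th and `(α+1)`-th fetch. -/
theorem eventual_strict_alternation
    (f d : ℕ → ℕ) (hf : StrictMono f) (hd : StrictMono d)
    (hfd : ∀ α : ℕ, 2 ≤ α → ∃ β : ℕ, f α < d β ∧ d β < f (α + 1))
    (hdf : ∀ β : ℕ, 2 ≤ β → ∃ α : ℕ, d β < f α ∧ f α < d (β + 1)) :
    ∃ N : ℕ, ∀ α : ℕ, N ≤ α → ∃! β : ℕ, f α < d β ∧ d β < f (α + 1) := by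
  refine ⟨max 2 (d 2), fun α hα => ?_⟩
  have hα2 : 2 ≤ α := le_trans (le_max_left _ _) hα
  have hfα : d 2 ≤ f α := le_trans (le_trans (le_max_right _ _) hα) (hf.le_apply)
  -- key: any two deliveries in the interval coincide
  have key : ∀ β₁ β₂ : ℕ, (f α < d β₁ ∧ d β₁ < f (α + 1)) →
      (f α < d β₂ ∧ d β₂ < f (α + 1)) → β₁ = β₂ := by
    have aux : ∀ β₁ β₂ : ℕ, β₁ < β₂ → (f α < d β₁ ∧ d β₁ < f (α + 1)) →
        (f α < d β₂ ∧ d β₂ < f (α + 1)) → False := by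
      intro β₁ β₂ hlt h1 h2
      have hβ1 : 2 ≤ β₁ := by
        by_contra hcon
        have : d β₁ ≤ d 2 := hd.monotone (by omega)
        omega
      obtain ⟨γ, hγ1, hγ2⟩ := hdf β₁ hβ1
      have h12 : d (β₁ + 1) ≤ d β₂ := hd.monotone (by omega)
      have hfγ1 : f α < f γ := lt_trans h1.1 hγ1
      have hfγ2 : f γ < f (α + 1) := lt_of_lt_of_le hγ2 (le_trans h12 h2.2.le)
      have := hf.lt_iff_lt.mp hfγ1
      have := hf.lt_iff_lt.mp hfγ2
      omega
    intro β₁ β₂ h1 h2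
    rcases lt_trichotomy β₁ β₂ with h | h | h
    · exact absurd (aux β₁ β₂ h h1 h2) (by simp)
    · exact h
    · exact absurd (aux β₂ β₁ h h2 h1) (by simp)
  obtain ⟨β, hβ⟩ := hfd α hα2
  exact ⟨β, hβ, fun y hy => key y β hy hβ⟩
end
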